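/- Let n ≥ 0 and let K be a simplicial complex in a finite-dimensional real normed vector space E (in the sense of Mathlib's Geometry.SimplicialComplex over ℝ) with finitely many faces, such that every face of K has at most n+1 vertices (i.e. K has dimension at most n). Then there exists a topological embedding of the underlying space of K (the union of the convex hulls of its faces, with the subspace topology) into the cube [0,1]^{2n+1}, i.e. a continuous injective map K.space → (Fin (2n+1) → ℝ) that is a homeomorphism onto its image and whose image is contained in the set of functions with values in [0,1]. -/

import Mathlib

open Finset Set

private lemma exists_param {α : Type*} (s : Finset α) :
    ∃ t : α → ℝ, Set.InjOn t ↑s ∧ ∀ v ∈ s, t v ∈ Set.Icc (0 : ℝ) 1 := by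
  classical
  refine ⟨fun v => if h : v ∈ s then (((s.equivFin ⟨v, h⟩ : Fin s.card) : ℕ) + 1 : ℝ) / s.card
    else 0, ?_, ?_⟩
  · intro a ha b hb hab
    have ha' : a ∈ s := ha
    have hb' : b ∈ s := hb
    have hcard : (0 : ℝ) < s.card := by
      exact_mod_cast Finset.card_pos.2 ⟨a, ha'⟩
    beta_reduce at hab; rw [dif_pos ha', dif_pos hb', div_left_inj' hcard.ne'] at hab
    have hnat : ((s.equivFin ⟨a, ha'⟩ : Fin s.card) : ℕ) = ((s.equivFin ⟨b, hb'⟩ : Fin s.card) : ℕ) := by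
      have h1 : (((s.equivFin ⟨a, ha'⟩ : Fin s.card) : ℕ) : ℝ) = ((s.equivFin ⟨b, hb'⟩ : Fin s.card) : ℕ) := by
        linarith
      exact_mod_cast h1
    have := s.equivFin.injective (Fin.ext hnat)
    exact congrArg Subtype.val this
  · intro v hv
    beta_reduce; rw [dif_pos hv]
    have hcard : (0 : ℝ) < s.card := by
      exact_mod_cast Finset.card_pos.2 ⟨v, hv⟩
    constructor
    · positivity
    · rw [div_le_one hcard]
      have : ((s.equivFin ⟨v, hv⟩ : Fin s.card) : ℕ) < s.card := (s.equivFin ⟨v, hv⟩).2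
      exact_mod_cast this

/-- Points on the moment curve are in general position: a vanishing affine dependency
among at most `d+1` points with distinct parameters is trivial. -/
private lemma moment_zero {α : Type*} (d : ℕ) (t : α → ℝ) (u : Finset α)
    (hinj : Set.InjOn t ↑u) (hcard : u.card ≤ d + 1) (w : α → ℝ)
    (h0 : ∑ v ∈ u, w v = 0)
    (h1 : ∀ j : Fin d, ∑ v ∈ u, w v * t v ^ ((j : ℕ) + 1) = 0) :
    ∀ v ∈ u, w v = 0 := by
  classical
  have hj : ∀ j ≤ d, ∑ v ∈ u, w v * t v ^ j = 0 := by
    intro j hjd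
    rcases Nat.eq_zero_or_pos j with rfl | hpos
    · simpa using h0
    · obtain ⟨i, rfl⟩ := Nat.exists_eq_succ_of_ne_zero hpos.ne'
      exact h1 ⟨i, by omega⟩
  intro v₀ hv₀
  set q : Polynomial ℝ := ∏ v ∈ u.erase v₀, (Polynomial.X - Polynomial.C (t v)) with hq
  have hdeg : q.natDegree ≤ d := by
    have hdq : q.natDegree = (u.erase v₀).card := by
      rw [hq, Polynomial.natDegree_prod_of_monic _ _ fun v _ => Polynomial.monic_X_sub_C _]
      simp [Polynomial.natDegree_X_sub_C]
    rw [hdq, Finset.card_erase_of_mem hv₀]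
    omega
  have heval : ∀ v, q.eval (t v) = ∏ v' ∈ u.erase v₀, (t v - t v') := by
    intro v; simp [hq, Polynomial.eval_prod]
  have hzero : ∑ v ∈ u, w v * q.eval (t v) = 0 := by
    have hstep : ∀ v ∈ u, w v * q.eval (t v)
        = ∑ i ∈ Finset.range (q.natDegree + 1), q.coeff i * (w v * t v ^ i) := by
      intro v _
      rw [Polynomial.eval_eq_sum_range, Finset.mul_sum]
      exact Finset.sum_congr rfl fun i _ => by ring
    rw [Finset.sum_congr rfl hstep, Finset.sum_comm]
    refine Finset.sum_eq_zero fun i hi => ?_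
    rw [← Finset.mul_sum, hj i (by have := Finset.mem_range.1 hi; omega), mul_zero]
  have hsingle : ∑ v ∈ u, w v * q.eval (t v) = w v₀ * q.eval (t v₀) := by
    refine Finset.sum_eq_single_of_mem v₀ hv₀ fun v hv hne => ?_
    rw [heval v, Finset.prod_eq_zero (Finset.mem_erase.2 ⟨hne, hv⟩) (sub_self (t v)), mul_zero]
  have hne : q.eval (t v₀) ≠ 0 := by
    rw [heval]
    refine Finset.prod_ne_zero_iff.2 fun v hv => sub_ne_zero.2 fun h => ?_
    exact (Finset.mem_erase.1 hv).1
      (hinj (Finset.mem_coe.2 hv₀) (Finset.mem_coe.2 (Finset.mem_erase.1 hv).2) h).symm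
  rw [hsingle] at hzero
  rcases mul_eq_zero.1 hzero with h | h
  · exact h
  · exact absurd h hne

/-- Every geometric simplicial complex in a finite-dimensional real normed space,
with finitely many faces, all of dimension at most `n` (i.e. with at most `n+1`
vertices), embeds topologically in the cube `[0,1]^(2n+1)`. -/
theorem stmt_0 (n : ℕ) (E : Type*) [NormedAddCommGroup E] [NormedSpace ℝ E]
    [FiniteDimensional ℝ E] (K : Geometry.SimplicialComplex ℝ E)
    (hfin : K.faces.Finite) (hdim : ∀ s ∈ K.faces, s.card ≤ n + 1) :
    ∃ f : K.space → (Fin (2 * n + 1) → ℝ),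
      Topology.IsEmbedding f ∧ ∀ (y : K.space) (i : Fin (2 * n + 1)),
        f y i ∈ Set.Icc (0 : ℝ) 1 := by
  classical
  -- The (finite) vertex set.
  set Vs : Finset E := hfin.toFinset.biUnion id with hVs
  have hfaceVs : ∀ {s : Finset E}, s ∈ K.faces → s ⊆ Vs := by
    intro s hs v hv
    exact Finset.mem_biUnion.2 ⟨s, hfin.mem_toFinset.2 hs, hv⟩
  -- Parameters in `(0,1]`, injective on the vertices.
  obtain ⟨t, htinj, ht01⟩ := exists_param Vs
  -- The moment curve map on vertices.
  set p : E → (Fin (2 * n + 1) → ℝ) := fun v i => t v ^ ((i : ℕ) + 1) with hp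
  have hp01 : ∀ v ∈ Vs, ∀ i : Fin (2 * n + 1), p v i ∈ Set.Icc (0 : ℝ) 1 := by
    intro v hv i
    obtain ⟨h0, h1⟩ := ht01 v hv
    exact ⟨pow_nonneg h0 _, pow_le_one₀ h0 h1⟩
  -- General position.
  have hgp : ∀ u : Finset E, u ⊆ Vs → u.card ≤ 2 * n + 2 → ∀ w : E → ℝ,
      ∑ v ∈ u, w v = 0 → ∑ v ∈ u, w v • p v = 0 → ∀ v ∈ u, w v = 0 := by
    intro u hu hcard w h0 h1
    refine moment_zero (2 * n + 1) t u (htinj.mono (Finset.coe_subset.2 hu)) (by omega) w h0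
      fun j => ?_
    have := congrFun h1 j
    simpa [hp, Finset.sum_apply] using this
  -- Existence of barycentric weights for points of convex hulls of finsets.
  have hex : ∀ (s : Finset E), ∀ x ∈ convexHull ℝ (↑s : Set E), ∃ wt : E → ℝ,
      (∀ v, v ∉ s → wt v = 0) ∧ (∀ v, 0 ≤ wt v) ∧ (∑ v ∈ s, wt v = 1) ∧
      (∑ v ∈ s, wt v • v = x) := by
    intro s x hx
    rw [Finset.convexHull_eq] at hx
    obtain ⟨w0, hw0, hws, hwx⟩ := hx
    refine ⟨fun v => if v ∈ s then w0 v else 0, fun v hv => if_neg hv, fun v => ?_, ?_, ?_⟩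
    · beta_reduce
      by_cases hv : v ∈ s
      · rw [if_pos hv]; exact hw0 v hv
      · rw [if_neg hv]
    · beta_reduce
      rw [Finset.sum_congr rfl fun v hv => if_pos hv]; exact hws
    · beta_reduce
      rw [Finset.sum_congr rfl fun v (hv : v ∈ s) => by rw [if_pos hv]]
      rw [Finset.centerMass_eq_of_sum_1 _ id hws] at hwx
      simpa using hwx
  -- Membership from weights.
  have hmem : ∀ (s : Finset E) (wt : E → ℝ), (∀ v, 0 ≤ wt v) → (∑ v ∈ s, wt v = 1) →
      ∑ v ∈ s, wt v • v ∈ convexHull ℝ (↑s : Set E) := by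
    intro s wt hpos hsum
    have := s.centerMass_mem_convexHull (w := wt) (z := id) (fun i hi => hpos i)
      (by rw [hsum]; exact one_pos) (fun i hi => Finset.mem_coe.2 hi)
    rwa [Finset.centerMass_eq_of_sum_1 _ id hsum] at this
  -- Choose a face and weights for each point of the space.
  have hWex : ∀ y : K.space, ∃ s : Finset E, s ∈ K.faces ∧ ∃ wt : E → ℝ,
      (∀ v, v ∉ s → wt v = 0) ∧ (∀ v, 0 ≤ wt v) ∧ (∑ v ∈ s, wt v = 1) ∧
      (∑ v ∈ s, wt v • v = (y : E)) := by
    intro y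
    obtain ⟨s, hs, hx⟩ := Geometry.SimplicialComplex.mem_space_iff.1 y.2
    obtain ⟨wt, h1, h2, h3, h4⟩ := hex s _ hx
    exact ⟨s, hs, wt, h1, h2, h3, h4⟩
  choose S hS W hWsupp hWpos hWsum hWrep using hWex
  -- Uniqueness of the weights.
  have huniq : ∀ (y : K.space) (s : Finset E), s ∈ K.faces → ∀ u : E → ℝ,
      (∀ v, v ∉ s → u v = 0) → (∀ v, 0 ≤ u v) → (∑ v ∈ s, u v = 1) →
      (∑ v ∈ s, u v • v = (y : E)) → u = W y := by
    intro y s hs u husupp hupos husum hurep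
    have hxs : (y : E) ∈ convexHull ℝ (↑s : Set E) := hurep ▸ hmem s u hupos husum
    have hxS : (y : E) ∈ convexHull ℝ (↑(S y) : Set E) :=
      (hWrep y) ▸ hmem _ _ (hWpos y) (hWsum y)
    have hxint : (y : E) ∈ convexHull ℝ (↑(s ∩ S y) : Set E) := by
      have := K.inter_subset_convexHull hs (hS y) ⟨hxs, hxS⟩
      rwa [Finset.coe_inter]
    obtain ⟨c, hcsupp, hcpos, hcsum, hcrep⟩ := hex (s ∩ S y) _ hxint
    have hceq : ∀ (r : Finset E), r ∈ K.faces → s ∩ S y ⊆ r → ∀ u' : E → ℝ,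
        (∀ v, v ∉ r → u' v = 0) → (∑ v ∈ r, u' v = 1) → (∑ v ∈ r, u' v • v = (y : E)) →
        u' = c := by
      intro r hr hsub u' hu'supp hu'sum hu'rep
      have hsum' : ∑ v ∈ r, u' v = ∑ v ∈ r, c v := by
        rw [hu'sum, ← Finset.sum_subset hsub (fun v _ hvn => hcsupp v hvn), hcsum]
      have hrep' : ∑ v ∈ r, u' v • v = ∑ v ∈ r, c v • v := by
        rw [hu'rep, ← Finset.sum_subset hsub (fun v _ hvn => by rw [hcsupp v hvn, zero_smul]),
          hcrep]
      have h1 := (K.indep hr).eq_of_sum_eq_sum_subtype hsum' hrep'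
      funext v
      by_cases hv : v ∈ r
      · exact h1 v hv
      · rw [hu'supp v hv, hcsupp v (fun hmem' => hv (hsub hmem'))]
    have h1 : u = c := hceq s hs Finset.inter_subset_left u husupp husum hurep
    have h2 : W y = c := hceq (S y) (hS y) Finset.inter_subset_right (W y) (hWsupp y)
      (hWsum y) (hWrep y)
    rw [h1, h2]
  -- The embedding.
  set f : K.space → (Fin (2 * n + 1) → ℝ) := fun y => ∑ v ∈ S y, W y v • p v with hf
  -- The range condition.
  have hrange : ∀ (y : K.space) (i : Fin (2 * n + 1)), f y i ∈ Set.Icc (0 : ℝ) 1 := by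
    intro y i
    have : ∑ v ∈ S y, W y v • p v i ∈ Set.Icc (0 : ℝ) 1 := by
      refine (convex_Icc (0 : ℝ) 1).sum_mem (fun v _ => hWpos y v) (hWsum y) fun v hv => ?_
      exact hp01 v (hfaceVs (hS y) hv) i
    simpa [hf, Finset.sum_apply] using this
  -- Injectivity.
  have hinj : Function.Injective f := by
    intro y₁ y₂ hfy
    set u : Finset E := S y₁ ∪ S y₂ with hu
    have huVs : u ⊆ Vs := Finset.union_subset (hfaceVs (hS y₁)) (hfaceVs (hS y₂))
    have hucard : u.card ≤ 2 * n + 2 := by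
      have hcu := Finset.card_union_le (S y₁) (S y₂)
      rw [← hu] at hcu
      have h1 := hdim _ (hS y₁)
      have h2 := hdim _ (hS y₂)
      omega
    have hsum1 : ∀ y : K.space, S y ⊆ u → ∑ v ∈ u, W y v = 1 := by
      intro y hsub
      rw [← Finset.sum_subset hsub (fun v _ hvn => hWsupp y v hvn)]
      exact hWsum y
    have hrep1 : ∀ y : K.space, S y ⊆ u → ∑ v ∈ u, W y v • v = (y : E) := by
      intro y hsub
      rw [← Finset.sum_subset hsub (fun v _ hvn => by rw [hWsupp y v hvn, zero_smul])]
      exact hWrep y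
    have hfu : ∀ y : K.space, S y ⊆ u → ∑ v ∈ u, W y v • p v = f y := by
      intro y hsub
      rw [hf, ← Finset.sum_subset hsub (fun v _ hvn => by rw [hWsupp y v hvn, zero_smul])]
    have key := hgp u huVs hucard (fun v => W y₁ v - W y₂ v) (by
        rw [Finset.sum_sub_distrib, hsum1 y₁ Finset.subset_union_left,
          hsum1 y₂ Finset.subset_union_right, sub_self]) (by
        simp only [sub_smul]
        rw [Finset.sum_sub_distrib, hfu y₁ Finset.subset_union_left,
          hfu y₂ Finset.subset_union_right, hfy, sub_self])
    have : (y₁ : E) = (y₂ : E) := by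
      rw [← hrep1 y₁ Finset.subset_union_left, ← hrep1 y₂ Finset.subset_union_right]
      refine Finset.sum_congr rfl fun v hv => ?_
      rw [sub_eq_zero.1 (key v hv)]
    exact Subtype.ext this
  -- Continuity, via a finite closed cover by the faces.
  have hcont : Continuous f := by
    refine (locallyFinite_of_finite
      (fun s : ↥hfin.toFinset => (Subtype.val ⁻¹' (convexHull ℝ (↑(s : Finset E) : Set E)) :
        Set K.space))).continuous ?_ ?_ ?_
    · ext y
      simp only [Set.mem_iUnion, Set.mem_univ, iff_true, Set.mem_preimage]
      obtain ⟨s, hs, hx⟩ := Geometry.SimplicialComplex.mem_space_iff.1 y.2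
      exact ⟨⟨s, hfin.mem_toFinset.2 hs⟩, hx⟩
    · intro s
      exact ((s : Finset E).finite_toSet.isClosed_convexHull ℝ).preimage continuous_subtype_val
    · intro s
      have hsf : (s : Finset E) ∈ K.faces := hfin.mem_toFinset.1 s.2
      -- extend the face to an affine basis
      have hind : AffineIndependent ℝ (fun q => q : (↑(s : Finset E) : Set E) → E) :=
        K.indep hsf
      obtain ⟨tset, hst, htind, htspan⟩ :=
        exists_subset_affineIndependent_affineSpan_eq_top hind
      have hfin_t : tset.Finite := finite_set_of_fin_dim_affineIndependent ℝ htind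
      set tF : Finset E := hfin_t.toFinset with htF
      have hmemtF : ∀ {v : E}, v ∈ tF ↔ v ∈ tset := fun {v} => hfin_t.mem_toFinset
      have hcoe : (↑tF : Set E) = tset := by ext x; simp [hmemtF]
      have hindF : AffineIndependent ℝ ((↑) : ↥tF → E) := by
        rw [← hcoe] at htind
        exact htind
      have htotF : affineSpan ℝ (Set.range ((↑) : ↥tF → E)) = ⊤ := by
        rw [Subtype.range_coe_subtype]
        have : {x | x ∈ tF} = tset := by ext x; simp [hmemtF]
        rw [this]
        exact htspan
      let b : AffineBasis ↥tF ℝ E := ⟨(↑), hindF, htotF⟩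
      set A : E → (Fin (2 * n + 1) → ℝ) := fun x => ∑ i : ↥tF, b.coord i x • p ↑i with hA
      have hAcont : Continuous A := by
        refine continuous_finset_sum _ fun i _ => ?_
        exact (continuous_barycentric_coord b i).smul continuous_const
      have hagree : ∀ y : K.space, (y : E) ∈ convexHull ℝ (↑(s : Finset E) : Set E) →
          f y = A (y : E) := by
        intro y hy
        obtain ⟨ws, hwssupp, hwspos, hwssum, hwsrep⟩ := hex (s : Finset E) _ hy
        have hws_eq : ws = W y := huniq y _ hsf ws hwssupp hwspos hwssum hwsrep
        have hsub : (s : Finset E) ⊆ tF := fun v hv => hmemtF.2 (hst hv)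
        have hWy_supp : ∀ v, v ∉ tF → W y v = 0 := by
          intro v hv
          rw [← hws_eq]
          exact hwssupp v (fun hvs => hv (hsub hvs))
        have hws_tF_sum : ∑ v ∈ tF, W y v = 1 := by
          rw [← hws_eq, ← Finset.sum_subset hsub (fun v _ hvn => hwssupp v hvn)]
          exact hwssum
        have hws_tF_rep : ∑ v ∈ tF, W y v • v = (y : E) := by
          rw [← hws_eq,
            ← Finset.sum_subset hsub (fun v _ hvn => by rw [hwssupp v hvn, zero_smul])]
          exact hwsrep
        have hbsum : ∑ i : ↥tF, b.coord i (y : E) = 1 := b.sum_coord_apply_eq_one _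
        have hbrep : ∑ i : ↥tF, b.coord i (y : E) • (i : E) = (y : E) := by
          have h := b.affineCombination_coord_eq_self (y : E)
          rwa [Finset.univ.affineCombination_eq_linear_combination _ _ hbsum] at h
        have hcoord : ∀ i : ↥tF, W y ↑i = b.coord i (y : E) := by
          have hb' := hindF.eq_of_sum_eq_sum (s := Finset.univ)
            (w₁ := fun i : ↥tF => W y ↑i) (w₂ := fun i : ↥tF => b.coord i (y : E))
            (by rw [hbsum, Finset.sum_coe_sort tF (W y), hws_tF_sum])
            (by rw [hbrep, Finset.sum_coe_sort tF (fun v => W y v • v), hws_tF_rep])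
          exact fun i => hb' i (Finset.mem_univ i)
        have hftF : f y = ∑ v ∈ tF, W y v • p v := by
          show (∑ v ∈ S y, W y v • p v) = ∑ v ∈ tF, W y v • p v
          calc ∑ v ∈ S y, W y v • p v
              = ∑ v ∈ S y ∪ tF, W y v • p v :=
                Finset.sum_subset Finset.subset_union_left
                  (fun v _ hvn => by rw [hWsupp y v hvn, zero_smul])
            _ = ∑ v ∈ tF, W y v • p v :=
                (Finset.sum_subset Finset.subset_union_right
                  (fun v _ hvn => by rw [hWy_supp v hvn, zero_smul])).symm
        rw [hftF, hA, ← Finset.sum_coe_sort tF (fun v => W y v • p v)]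
        exact Finset.sum_congr rfl fun i _ => by rw [hcoord i]
      exact ContinuousOn.congr ((hAcont.comp continuous_subtype_val).continuousOn)
        (fun y hy => hagree y hy)
  -- The space is compact.
  have hcompact : CompactSpace K.space := by
    rw [← isCompact_iff_compactSpace]
    exact hfin.isCompact_biUnion fun s _ => s.finite_toSet.isCompact_convexHull ℝ
  exact ⟨f, (hcont.isClosedEmbedding hinj).isEmbedding, hrange⟩
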